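/- For i.i.d. Bernoulli(p) trials with 0 < p < 1 and window size w ≥ 2, the expected waiting time for 2 successes within a window of w time steps is E(τ_{(w,2)}) = 1/p + 1/(p(1 - (1-p)^{w-1})). -/

import Mathlib

open MeasureTheory ProbabilityTheory ENNReal
open scoped Classical

/-- The waiting time (valued in `ℝ≥0∞`, `∞` if it never happens) until some window of
`w` consecutive trials (window size possibly infinite) among the trials
`Z 0, Z 1, ...` contains at least `s` successes. -/
noncomputable def tauWin {Ω : Type*} (Z : ℕ → Ω → Bool) (w : ℕ∞) (s : ℕ) (ω : Ω) : ℝ≥0∞ :=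
  sInf ((fun t : ℕ => (t : ℝ≥0∞)) ''
    {t | s ≤ ((Finset.range t).filter
      (fun i : ℕ => (t : ℕ∞) ≤ (i : ℕ∞) + w ∧ Z i ω = true)).card})


noncomputable def Wgt (p : ℝ) (b : Bool) : ℝ≥0∞ := if b then ENNReal.ofReal p else ENNReal.ofReal (1-p)

def okF (w t : ℕ) (f : Fin t → Bool) : Prop :=
  ∀ i j : Fin t, (i:ℕ) < (j:ℕ) → (j:ℕ) < (i:ℕ) + w → f i = true → f j = true → False

instance {w t : ℕ} : DecidablePred (okF w t) := fun _ => by unfold okF; infer_instance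

noncomputable def aSeq (p : ℝ) (w t : ℕ) : ℝ≥0∞ :=
  ∑ f ∈ Finset.univ.filter (okF w t), ∏ i, Wgt p (f i)

noncomputable def dSeq (p : ℝ) (w k t : ℕ) : ℝ≥0∞ :=
  ∑ f ∈ Finset.univ.filter
    (fun f : Fin t → Bool => okF w t f ∧ ∀ j : Fin t, (j:ℕ) < k → f j = false),
    ∏ i, Wgt p (f i)

lemma okF_zero {w : ℕ} (f : Fin 0 → Bool) : okF w 0 f := fun i => i.elim0

lemma aSeq_zero' (p : ℝ) (w : ℕ) : aSeq p w 0 = 1 := by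
  rw [aSeq]
  rw [Finset.filter_true_of_mem (fun f _ => okF_zero f)]
  simp

lemma dSeq_zero (p : ℝ) (w k : ℕ) : dSeq p w k 0 = 1 := by
  rw [dSeq]
  rw [Finset.filter_true_of_mem (fun f _ => ⟨okF_zero f, fun j => j.elim0⟩)]
  simp

lemma dSeq_zero_k (p : ℝ) (w t : ℕ) : dSeq p w 0 t = aSeq p w t := by
  rw [dSeq, aSeq]
  congr 1
  apply Finset.filter_congr
  intro f _
  simp only [Nat.not_lt_zero, false_implies, implies_true, and_true]

lemma okF_cons {w t : ℕ} (b : Bool) (f : Fin t → Bool) :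
    okF w (t+1) (Fin.cons b f) ↔
      okF w t f ∧ (b = true → ∀ j : Fin t, (j:ℕ) < w - 1 → f j = false) := by
  constructor
  · intro h
    refine ⟨fun i j hij hjw hi hj => h i.succ j.succ (by simpa using hij) (by simp; omega) (by simpa using hi) (by simpa using hj), ?_⟩
    intro hb j hj
    by_contra hfj
    exact h 0 j.succ (by simp) (by simp; omega) (by simpa using hb)
      (by simpa using Bool.not_eq_false _ |>.mp hfj)
  · rintro ⟨h1, h2⟩ i j hij hjw hi hj
    rcases Fin.eq_zero_or_eq_succ j with rfl | ⟨j', rfl⟩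
    · simp at hij
    rcases Fin.eq_zero_or_eq_succ i with rfl | ⟨i', rfl⟩
    · simp only [Fin.cons_zero] at hi
      simp only [Fin.cons_succ] at hj
      have := h2 hi j' (by simp at hjw; omega)
      rw [hj] at this; exact Bool.noConfusion this
    · simp only [Fin.cons_succ] at hi hj
      exact h1 i' j' (by simpa using hij) (by simp at hjw ⊢; omega) hi hj

lemma prod_cons {t : ℕ} (p : ℝ) (b : Bool) (f : Fin t → Bool) :
    (∏ i, Wgt p ((Fin.cons b f : Fin (t+1) → Bool) i)) = Wgt p b * ∏ i, Wgt p (f i) := by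
  rw [Fin.prod_univ_succ]
  simp

lemma sum_cons_split {t : ℕ} (G : (Fin (t+1) → Bool) → ℝ≥0∞) :
    ∑ f : Fin (t+1) → Bool, G f
      = ∑ g : Fin t → Bool, (G (Fin.cons false g) + G (Fin.cons true g)) := by
  rw [← (Fin.consEquiv (fun _ => Bool)).sum_comp G]
  rw [Fintype.sum_prod_type]
  rw [Fintype.sum_bool]
  rw [← Finset.sum_add_distrib]
  congr 1
  ext g
  rw [add_comm]
  rfl

lemma aSeq_succ (p : ℝ) (w t : ℕ) :
    aSeq p w (t+1) = Wgt p false * aSeq p w t + Wgt p true * dSeq p w (w-1) t := by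
  rw [aSeq, Finset.sum_filter, sum_cons_split]
  rw [Finset.sum_add_distrib]
  congr 1
  · rw [aSeq, Finset.sum_filter, Finset.mul_sum]
    congr 1; ext g
    rw [prod_cons]
    have hiff : okF w (t+1) (Fin.cons false g) ↔ okF w t g := by
      rw [okF_cons]; simp
    rw [if_congr hiff rfl rfl]
    split <;> ring
  · rw [dSeq, Finset.sum_filter, Finset.mul_sum]
    congr 1; ext g
    rw [prod_cons]
    have hiff : okF w (t+1) (Fin.cons true g) ↔
        (okF w t g ∧ ∀ j : Fin t, (j:ℕ) < w - 1 → g j = false) := by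
      rw [okF_cons]; simp
    rw [if_congr hiff rfl rfl]
    split <;> ring

lemma dSeq_succ (p : ℝ) (w k t : ℕ) :
    dSeq p w (k+1) (t+1) = Wgt p false * dSeq p w k t := by
  rw [dSeq, Finset.sum_filter, sum_cons_split]
  rw [dSeq, Finset.sum_filter, Finset.mul_sum]
  have hfalse : ∀ g : Fin t → Bool,
      (if okF w (t+1) (Fin.cons false g) ∧
          (∀ j : Fin (t+1), (j:ℕ) < k+1 → (Fin.cons false g : Fin (t+1) → Bool) j = false)
        then ∏ i, Wgt p ((Fin.cons false g : Fin (t+1) → Bool) i) else 0)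
        = Wgt p false * (if okF w t g ∧ (∀ j : Fin t, (j:ℕ) < k → g j = false)
            then ∏ i, Wgt p (g i) else 0) := by
    intro g
    rw [prod_cons]
    have hiff : (okF w (t+1) (Fin.cons false g) ∧
        (∀ j : Fin (t+1), (j:ℕ) < k+1 → (Fin.cons false g : Fin (t+1) → Bool) j = false))
        ↔ (okF w t g ∧ (∀ j : Fin t, (j:ℕ) < k → g j = false)) := by
      rw [okF_cons]
      constructor
      · rintro ⟨⟨h1, -⟩, h2⟩
        exact ⟨h1, fun j hj => by simpa using h2 j.succ (by simp; omega)⟩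
      · rintro ⟨h1, h2⟩
        refine ⟨⟨h1, by simp⟩, ?_⟩
        intro j hj
        rcases Fin.eq_zero_or_eq_succ j with rfl | ⟨j', rfl⟩
        · simp
        · simpa using h2 j' (by simp at hj; omega)
    rw [if_congr hiff rfl rfl]
    split <;> ring
  have htrue : ∀ g : Fin t → Bool,
      (if okF w (t+1) (Fin.cons true g) ∧
          (∀ j : Fin (t+1), (j:ℕ) < k+1 → (Fin.cons true g : Fin (t+1) → Bool) j = false)
        then ∏ i, Wgt p ((Fin.cons true g : Fin (t+1) → Bool) i) else 0) = 0 := by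
    intro g
    rw [if_neg]
    rintro ⟨-, h2⟩
    have := h2 0 (by simp)
    simp at this
  calc ∑ g : Fin t → Bool, ((if okF w (t+1) (Fin.cons false g) ∧
          (∀ j : Fin (t+1), (j:ℕ) < k+1 → (Fin.cons false g : Fin (t+1) → Bool) j = false)
        then ∏ i, Wgt p ((Fin.cons false g : Fin (t+1) → Bool) i) else 0)
        + (if okF w (t+1) (Fin.cons true g) ∧
          (∀ j : Fin (t+1), (j:ℕ) < k+1 → (Fin.cons true g : Fin (t+1) → Bool) j = false)
        then ∏ i, Wgt p ((Fin.cons true g : Fin (t+1) → Bool) i) else 0))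
      = ∑ g : Fin t → Bool, Wgt p false * (if okF w t g ∧ (∀ j : Fin t, (j:ℕ) < k → g j = false)
            then ∏ i, Wgt p (g i) else 0) := by
        apply Finset.sum_congr rfl
        intro g _
        rw [hfalse g, htrue g, add_zero]
    _ = _ := rfl

lemma dSeq_eq (p : ℝ) (w : ℕ) : ∀ t k, dSeq p w k t = (Wgt p false)^(min k t) * aSeq p w (t - k) := by
  intro t
  induction t with
  | zero => intro k; simp [dSeq_zero, aSeq_zero']
  | succ t ih =>
    intro k
    cases k with
    | zero => simp [dSeq_zero_k]
    | succ k =>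
      rw [dSeq_succ, ih k]
      rw [show min (k+1) (t+1) = min k t + 1 by omega]
      rw [show t + 1 - (k+1) = t - k by omega]
      ring
lemma ennreal_tsum_succ (h : ℕ → ℝ≥0∞) : ∑' t, h t = h 0 + ∑' t, h (t+1) := by
  rw [ENNReal.tsum_eq_add_tsum_ite 0]
  congr 1
  have key := Function.Injective.tsum_eq (g := fun n : ℕ => n + 1)
      (f := fun x : ℕ => if x = 0 then (0:ℝ≥0∞) else h x)
      (fun a b hab => by simpa using hab)
      (by
        intro n hn
        simp only [Function.mem_support] at hn
        rcases n with _ | m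
        · simp at hn
        · exact ⟨m, rfl⟩)
  have key2 := key.symm.trans (tsum_congr (fun t => if_neg (Nat.succ_ne_zero t)))
  convert key2 using 3
  congr 1

lemma ennreal_tsum_shift (h : ℕ → ℝ≥0∞) (k : ℕ) :
    ∑' t, h t = ∑ t ∈ Finset.range k, h t + ∑' t, h (t + k) := by
  induction k with
  | zero => simp
  | succ k ih =>
    rw [ih, Finset.sum_range_succ, add_assoc]
    congr 1
    rw [ennreal_tsum_succ (fun t => h (t + k))]
    simp only [Nat.zero_add]
    congr 1
    apply tsum_congr
    intro t
    congr 1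
    omega

lemma PQ_sum {p : ℝ} (hp : 0 < p) (hp1 : p < 1) : Wgt p true + Wgt p false = 1 := by
  rw [Wgt, Wgt, if_pos rfl, if_neg (by simp)]
  rw [← ENNReal.ofReal_add (le_of_lt hp) (by linarith), ← ENNReal.ofReal_one]
  congr 1; ring

lemma Q_lt_one {p : ℝ} (hp : 0 < p) (hp1 : p < 1) : Wgt p false < 1 := by
  rw [Wgt, if_neg (by simp), ← ENNReal.ofReal_one]
  exact (ENNReal.ofReal_lt_ofReal_iff_of_nonneg (by linarith)).mpr (by linarith)

lemma aSeq_le_one {p : ℝ} (hp : 0 < p) (hp1 : p < 1) {w : ℕ} : ∀ t, aSeq p w t ≤ 1 := by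
  intro t
  induction t using Nat.strong_induction_on with
  | _ t ih =>
    cases t with
    | zero => rw [aSeq_zero']
    | succ t =>
      rw [aSeq_succ, dSeq_eq]
      calc Wgt p false * aSeq p w t + Wgt p true * ((Wgt p false)^(min (w-1) t) * aSeq p w (t - (w-1)))
          ≤ Wgt p false * 1 + Wgt p true * (1 * 1) := by
            gcongr
            · exact ih t (by omega)
            · exact pow_le_one' (le_of_lt (Q_lt_one hp hp1)) _
            · exact ih _ (by omega)
        _ = 1 := by
            rw [mul_one, mul_one, mul_one, add_comm]
            exact PQ_sum hp hp1
lemma A_eq {p : ℝ} (hp : 0 < p) (hp1 : p < 1) {w : ℕ} (hw : 2 ≤ w) :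
    ∑' t, aSeq p w t
      = 1 + Wgt p false * ∑' t, aSeq p w t
        + Wgt p true * (∑ t ∈ Finset.range (w-1), (Wgt p false)^t)
        + Wgt p true * ((Wgt p false)^(w-1) * ∑' t, aSeq p w t) := by
  set k := w - 1 with hk
  conv_lhs => rw [ennreal_tsum_succ]
  rw [aSeq_zero']
  have h1 : ∀ t, aSeq p w (t+1)
      = Wgt p false * aSeq p w t + Wgt p true * ((Wgt p false)^(min k t) * aSeq p w (t - k)) := by
    intro t; rw [aSeq_succ, dSeq_eq]
  rw [tsum_congr h1, ENNReal.tsum_add, ENNReal.tsum_mul_left, ENNReal.tsum_mul_left]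
  have h2 : ∑' t, (Wgt p false)^(min k t) * aSeq p w (t - k)
      = (∑ t ∈ Finset.range k, (Wgt p false)^t) + (Wgt p false)^k * ∑' t, aSeq p w t := by
    rw [ennreal_tsum_shift _ k]
    congr 1
    · apply Finset.sum_congr rfl
      intro t ht
      simp only [Finset.mem_range] at ht
      rw [min_eq_right (by omega), Nat.sub_eq_zero_of_le (by omega), aSeq_zero', mul_one]
    · rw [← ENNReal.tsum_mul_left]
      apply tsum_congr
      intro t
      rw [min_eq_left (by omega), Nat.add_sub_cancel]
  rw [h2, mul_add]
  ring

lemma A_ne_top {p : ℝ} (hp : 0 < p) (hp1 : p < 1) {w : ℕ} (hw : 2 ≤ w) :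
    ∑' t, aSeq p w t ≠ ⊤ := by
  set k := w - 1 with hk
  have hk1 : 1 ≤ k := by omega
  set q : ℝ := 1 - p with hq
  have hq0 : 0 ≤ q := by simp [hq]; linarith
  have hq1 : q < 1 := by simp [hq]; linarith
  set r : ℝ := q + p * q^k with hr
  have hr1 : r < 1 := by
    have : q^k < 1 := pow_lt_one₀ hq0 hq1 (by omega)
    have : p * q^k < p * 1 := by
      apply mul_lt_mul_of_pos_left this hp
    simp [hr]; nlinarith
  have hr0 : 0 ≤ r := by positivity
  set K : ℝ := (1 + p * k) / (1 - r) with hK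
  have hK0 : 0 < 1 - r := by linarith
  -- identities in ℝ≥0∞
  have hQ : Wgt p false = ENNReal.ofReal q := by rw [Wgt, if_neg (by simp)]
  have hP : Wgt p true = ENNReal.ofReal p := by rw [Wgt, if_pos rfl]
  have key : ∀ N, ∑ t ∈ Finset.range N, aSeq p w t ≤ ENNReal.ofReal K := by
    intro N
    induction N with
    | zero => simp
    | succ N ih =>
      have step1 : ∑ t ∈ Finset.range (N+1), aSeq p w t
          = aSeq p w 0 + ∑ t ∈ Finset.range N, aSeq p w (t+1) := by
        rw [Finset.sum_range_succ']
        rw [add_comm]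
      have step2 : ∑ t ∈ Finset.range N, aSeq p w (t+1)
          = Wgt p false * ∑ t ∈ Finset.range N, aSeq p w t
            + Wgt p true * ∑ t ∈ Finset.range N, ((Wgt p false)^(min k t) * aSeq p w (t - k)) := by
        rw [Finset.mul_sum, Finset.mul_sum, ← Finset.sum_add_distrib]
        apply Finset.sum_congr rfl
        intro t _
        rw [aSeq_succ, dSeq_eq]
      have step3 : ∑ t ∈ Finset.range N, ((Wgt p false)^(min k t) * aSeq p w (t - k))
          ≤ (k : ℝ≥0∞) + (Wgt p false)^k * ∑ t ∈ Finset.range N, aSeq p w t := by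
        have hterm : ∀ t ∈ Finset.range N, (Wgt p false)^(min k t) * aSeq p w (t - k)
            ≤ (if t < k then 1 else (Wgt p false)^k * aSeq p w (t - k)) := by
          intro t _
          by_cases h : t < k
          · rw [if_pos h]
            calc (Wgt p false)^(min k t) * aSeq p w (t - k)
                ≤ 1 * 1 := by
                  gcongr
                  · exact pow_le_one' (le_of_lt (Q_lt_one hp hp1)) _
                  · exact aSeq_le_one hp hp1 _
              _ = 1 := by rw [mul_one]
          · rw [if_neg h, min_eq_left (by omega)]
        refine le_trans (Finset.sum_le_sum hterm) ?_
        rw [Finset.sum_ite]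
        gcongr
        · calc (∑ _x ∈ Finset.filter (fun t => t < k) (Finset.range N), (1:ℝ≥0∞))
              = ((Finset.filter (fun t => t < k) (Finset.range N)).card : ℝ≥0∞) := by simp
            _ ≤ (k : ℝ≥0∞) := by
                have hsub : Finset.filter (fun t => t < k) (Finset.range N) ⊆ Finset.range k := by
                  intro x hx
                  simp only [Finset.mem_filter, Finset.mem_range] at hx ⊢
                  exact hx.2
                have := Finset.card_le_card hsub
                exact_mod_cast Nat.cast_le.mpr (this.trans_eq (Finset.card_range k))
        · rw [Finset.mul_sum]
          have himg : Finset.filter (fun t => ¬ t < k) (Finset.range N)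
              ⊆ (Finset.range N).image (fun t => t + k) := by
            intro x hx
            simp only [Finset.mem_filter, Finset.mem_range, not_lt] at hx
            simp only [Finset.mem_image, Finset.mem_range]
            exact ⟨x - k, by omega, by omega⟩
          calc ∑ x ∈ Finset.filter (fun t => ¬ t < k) (Finset.range N),
                  (Wgt p false)^k * aSeq p w (x - k)
              ≤ ∑ x ∈ (Finset.range N).image (fun t => t + k),
                  (Wgt p false)^k * aSeq p w (x - k) :=
                Finset.sum_le_sum_of_subset himg
            _ = ∑ t ∈ Finset.range N, (Wgt p false)^k * aSeq p w t := by
                rw [Finset.sum_image (by intro a _ b _ h; exact Nat.add_right_cancel h)]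
                apply Finset.sum_congr rfl
                intro t _
                rw [Nat.add_sub_cancel]
      have hKnn : 0 ≤ K := div_nonneg (by positivity) hK0.le
      have hchain : ∑ t ∈ Finset.range (N+1), aSeq p w t
          ≤ 1 + (Wgt p false * ∑ t ∈ Finset.range N, aSeq p w t
            + Wgt p true * ((k : ℝ≥0∞) + (Wgt p false)^k * ∑ t ∈ Finset.range N, aSeq p w t)) := by
        rw [step1, step2, aSeq_zero']
        gcongr
      refine le_trans hchain ?_
      have hmid : 1 + (Wgt p false * ∑ t ∈ Finset.range N, aSeq p w t
            + Wgt p true * ((k : ℝ≥0∞) + (Wgt p false)^k * ∑ t ∈ Finset.range N, aSeq p w t))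
          ≤ 1 + (Wgt p false * ENNReal.ofReal K
            + Wgt p true * ((k : ℝ≥0∞) + (Wgt p false)^k * ENNReal.ofReal K)) := by
        gcongr <;> exact ih
      refine le_trans hmid ?_
      -- now: 1 + (Q * ofReal K + P * (k + Q^k * ofReal K)) ≤ ofReal K
      rw [hP, hQ]
      have heq : (1:ℝ≥0∞) + (ENNReal.ofReal q * ENNReal.ofReal K
          + ENNReal.ofReal p * ((k:ℝ≥0∞) + (ENNReal.ofReal q)^k * ENNReal.ofReal K))
          = ENNReal.ofReal (1 + (q*K + p*((k:ℝ) + q^k*K))) := by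
        rw [← ENNReal.ofReal_pow hq0,
          ← ENNReal.ofReal_mul (pow_nonneg hq0 _),
          ← ENNReal.ofReal_natCast k,
          ← ENNReal.ofReal_add (Nat.cast_nonneg k) (mul_nonneg (pow_nonneg hq0 _) hKnn),
          ← ENNReal.ofReal_mul hp.le,
          ← ENNReal.ofReal_mul hq0,
          ← ENNReal.ofReal_add (mul_nonneg hq0 hKnn)
            (mul_nonneg hp.le (add_nonneg (Nat.cast_nonneg k) (mul_nonneg (pow_nonneg hq0 _) hKnn))),
          ← ENNReal.ofReal_one,
          ← ENNReal.ofReal_add zero_le_one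
            (add_nonneg (mul_nonneg hq0 hKnn) (mul_nonneg hp.le
              (add_nonneg (Nat.cast_nonneg k) (mul_nonneg (pow_nonneg hq0 _) hKnn))))]
      rw [heq]
      apply ENNReal.ofReal_le_ofReal
      have hKval : (1 - r) * K = 1 + p * k := by
        rw [hK]; field_simp
      nlinarith [hKval]
  rw [← lt_top_iff_ne_top]
  calc ∑' t, aSeq p w t = ⨆ s : Finset ℕ, ∑ t ∈ s, aSeq p w t := ENNReal.tsum_eq_iSup_sum
    _ ≤ ENNReal.ofReal K := by
        apply iSup_le
        intro s
        obtain ⟨n, hn⟩ := s.exists_nat_subset_range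
        exact le_trans (Finset.sum_le_sum_of_subset hn) (key n)
    _ < ⊤ := ENNReal.ofReal_lt_top
lemma A_val {p : ℝ} (hp : 0 < p) (hp1 : p < 1) {w : ℕ} (hw : 2 ≤ w) :
    ∑' t, aSeq p w t = ENNReal.ofReal (1 / p + 1 / (p * (1 - (1 - p) ^ (w - 1)))) := by
  set k := w - 1 with hk
  have hk1 : 1 ≤ k := by omega
  set q : ℝ := 1 - p with hq
  have hq0 : 0 ≤ q := by simp [hq]; linarith
  have hq1 : q < 1 := by simp [hq]; linarith
  have hqk : q ^ k < 1 := pow_lt_one₀ hq0 hq1 (by omega)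
  have hQ : Wgt p false = ENNReal.ofReal q := by rw [Wgt, if_neg (by simp)]
  have hP : Wgt p true = ENNReal.ofReal p := by rw [Wgt, if_pos rfl]
  have hfin := A_ne_top hp hp1 hw
  have hA := A_eq hp hp1 hw
  set x := (∑' t, aSeq p w t).toReal with hx
  have hx0 : 0 ≤ x := ENNReal.toReal_nonneg
  have hAx : ∑' t, aSeq p w t = ENNReal.ofReal x := (ENNReal.ofReal_toReal hfin).symm
  rw [hAx] at hA
  set g : ℝ := ∑ t ∈ Finset.range k, q ^ t with hg
  have hg0 : 0 ≤ g := Finset.sum_nonneg (fun t _ => pow_nonneg hq0 t)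
  have hG : (∑ t ∈ Finset.range k, (Wgt p false)^t) = ENNReal.ofReal g := by
    rw [hQ, hg, ENNReal.ofReal_sum_of_nonneg (fun t _ => pow_nonneg hq0 t)]
    apply Finset.sum_congr rfl
    intro t _
    rw [ENNReal.ofReal_pow hq0]
  rw [hG, hQ, hP] at hA
  have heq : (1:ℝ≥0∞) + ENNReal.ofReal q * ENNReal.ofReal x + ENNReal.ofReal p * ENNReal.ofReal g
      + ENNReal.ofReal p * ((ENNReal.ofReal q)^k * ENNReal.ofReal x)
      = ENNReal.ofReal (1 + q * x + p * g + p * (q^k * x)) := by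
    rw [← ENNReal.ofReal_pow hq0,
      ← ENNReal.ofReal_mul (pow_nonneg hq0 _),
      ← ENNReal.ofReal_mul hp.le,
      ← ENNReal.ofReal_mul hp.le,
      ← ENNReal.ofReal_mul hq0,
      ← ENNReal.ofReal_one]
    rw [← ENNReal.ofReal_add (by positivity) (by positivity),
      ← ENNReal.ofReal_add (by positivity) (mul_nonneg hp.le hg0),
      ← ENNReal.ofReal_add (by linarith [mul_nonneg hq0 hx0, mul_nonneg hp.le hg0]) (by positivity)]
  rw [heq] at hA
  have hxeq : x = 1 + q * x + p * g + p * (q^k * x) := by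
    have := (ENNReal.ofReal_eq_ofReal_iff hx0 (by linarith [mul_nonneg hq0 hx0, mul_nonneg hp.le hg0, mul_nonneg hp.le (mul_nonneg (pow_nonneg hq0 k) hx0)])).mp hA
    linarith [this]
  have hgval : p * g = 1 - q^k := by
    rw [hg]
    rw [geom_sum_eq (by intro h; rw [h] at hq1; linarith)]
    have h1 : q - 1 = -p := by rw [hq]; ring
    rw [h1]
    have hpne : (-p:ℝ) ≠ 0 := by linarith
    field_simp
    ring
  rw [hAx]
  congr 1
  have hden : 0 < 1 - q^k := by linarith
  have hsolve : x * (p * (1 - q^k)) = 2 - q^k := by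
    have h2 : 1 - q - p * q^k = p * (1 - q^k) := by rw [hq]; ring
    nlinarith [hxeq, hgval]
  have : x = (2 - q^k) / (p * (1 - q^k)) := by
    field_simp at hsolve ⊢
    linarith [hsolve]
  rw [this, hq]
  rw [div_eq_iff (by positivity)]
  have hden' : 1 - (1 - p) ^ k ≠ 0 := hden.ne'
  field_simp
  ring
lemma sInf_image_nat (S : Set ℕ) :
    sInf ((fun t : ℕ => (t : ℝ≥0∞)) '' S)
      = ∑' t : ℕ, (if ∀ s ∈ S, t < s then (1:ℝ≥0∞) else 0) := by
  rcases S.eq_empty_or_nonempty with rfl | hS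
  · simp only [Set.image_empty, sInf_empty]
    have : ∀ t : ℕ, (if ∀ s ∈ (∅ : Set ℕ), t < s then (1:ℝ≥0∞) else 0) = 1 := by
      intro t; rw [if_pos]; simp
    rw [tsum_congr this]
    exact (ENNReal.tsum_const_eq_top_of_ne_zero one_ne_zero).symm
  · set m := sInf S with hm
    have hmS : m ∈ S := Nat.sInf_mem hS
    have hL : sInf ((fun t : ℕ => (t : ℝ≥0∞)) '' S) = (m : ℝ≥0∞) := by
      apply le_antisymm
      · exact sInf_le ⟨m, hmS, rfl⟩
      · apply le_sInf
        rintro b ⟨s, hs, rfl⟩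
        exact Nat.cast_le.mpr (Nat.sInf_le hs)
    rw [hL]
    have hcond : ∀ t : ℕ, (∀ s ∈ S, t < s) ↔ t < m := by
      intro t
      constructor
      · intro h; exact h m hmS
      · intro h s hs; exact lt_of_lt_of_le h (Nat.sInf_le hs)
    have : ∀ t : ℕ, (if ∀ s ∈ S, t < s then (1:ℝ≥0∞) else 0) = (if t < m then 1 else 0) := by
      intro t
      by_cases h : t < m
      · rw [if_pos ((hcond t).mpr h), if_pos h]
      · rw [if_neg (fun hc => h ((hcond t).mp hc)), if_neg h]
    rw [tsum_congr this]
    rw [tsum_eq_sum (s := Finset.range m) (by intro t ht; rw [if_neg]; simpa using ht)]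
    rw [Finset.sum_congr rfl (fun t ht => if_pos (by simpa using ht))]
    simp
section meas
variable {Ω : Type*} [MeasurableSpace Ω]

def cylSet (Z : ℕ → Ω → Bool) (t : ℕ) (f : Fin t → Bool) : Set Ω :=
  ⋂ i : Fin t, {ω | Z i ω = f i}

def Bset (Z : ℕ → Ω → Bool) (w t : ℕ) : Set Ω :=
  {ω | ∀ i j : ℕ, i < j → j < t → j < i + w → ¬(Z i ω = true ∧ Z j ω = true)}

lemma mem_cylSet {Z : ℕ → Ω → Bool} {t : ℕ} {f : Fin t → Bool} {ω : Ω} :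
    ω ∈ cylSet Z t f ↔ ∀ i : Fin t, Z i ω = f i := by
  simp [cylSet]

lemma cylSet_measurable {Z : ℕ → Ω → Bool} (hmeas : ∀ i, Measurable (Z i)) (t : ℕ)
    (f : Fin t → Bool) : MeasurableSet (cylSet Z t f) := by
  apply MeasurableSet.iInter
  intro i
  exact hmeas i (measurableSet_singleton (f i))

lemma cylSet_disjoint {Z : ℕ → Ω → Bool} {t : ℕ} {f g : Fin t → Bool} (hfg : f ≠ g) :
    Disjoint (cylSet Z t f) (cylSet Z t g) := by
  rw [Set.disjoint_left]
  intro ω hf hg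
  apply hfg
  funext i
  rw [← mem_cylSet.mp hf i, ← mem_cylSet.mp hg i]

lemma Bset_eq_union (Z : ℕ → Ω → Bool) (w t : ℕ) :
    Bset Z w t = ⋃ f ∈ Finset.filter (okF w t) Finset.univ, cylSet Z t f := by
  ext ω
  constructor
  · intro h
    refine Set.mem_iUnion₂.mpr ⟨(fun i : Fin t => Z i ω), ?_, mem_cylSet.mpr (fun i => rfl)⟩
    simp only [Finset.mem_filter, Finset.mem_univ, true_and]
    intro i j hij hjw hfi hfj
    exact h i j hij j.isLt hjw ⟨hfi, hfj⟩
  · intro h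
    obtain ⟨f, hf, hcyl⟩ := Set.mem_iUnion₂.mp h
    simp only [Finset.mem_coe, Finset.mem_filter, Finset.mem_univ, true_and] at hf
    intro i j hij hjt hjw ⟨hi, hj⟩
    have hit : i < t := lt_trans hij hjt
    have hfi : f ⟨i, hit⟩ = true := by rw [← mem_cylSet.mp hcyl ⟨i, hit⟩]; exact hi
    have hfj : f ⟨j, hjt⟩ = true := by rw [← mem_cylSet.mp hcyl ⟨j, hjt⟩]; exact hj
    exact hf ⟨i, hit⟩ ⟨j, hjt⟩ hij hjw hfi hfj

variable (μ : Measure Ω) [IsProbabilityMeasure μ]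

lemma meas_preimage {p : ℝ} (hp : 0 < p) (hp1 : p < 1) {Z : ℕ → Ω → Bool}
    (hmeas : ∀ i, Measurable (Z i)) (hbern : ∀ i, μ {ω | Z i ω = true} = ENNReal.ofReal p)
    (i : ℕ) (b : Bool) : μ (Z i ⁻¹' {b}) = Wgt p b := by
  have htrue : Z i ⁻¹' {true} = {ω | Z i ω = true} := rfl
  cases b
  · have hcompl : Z i ⁻¹' {false} = (Z i ⁻¹' {true})ᶜ := by
      ext ω; simp
    rw [hcompl, measure_compl (hmeas i (measurableSet_singleton true)) (measure_ne_top μ _),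
      measure_univ, htrue, hbern i, Wgt]
    rw [if_neg (by simp), ← ENNReal.ofReal_one, ← ENNReal.ofReal_sub _ hp.le]
  · rw [Wgt, if_pos rfl, ← hbern i, ← htrue]

lemma meas_cylSet {p : ℝ} (hp : 0 < p) (hp1 : p < 1) {Z : ℕ → Ω → Bool}
    (hmeas : ∀ i, Measurable (Z i))
    (hindep : iIndepFun Z μ)
    (hbern : ∀ i, μ {ω | Z i ω = true} = ENNReal.ofReal p)
    (t : ℕ) (f : Fin t → Bool) : μ (cylSet Z t f) = ∏ i, Wgt p (f i) := by
  classical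
  set F : ℕ → Bool := fun n => if h : n < t then f ⟨n, h⟩ else true with hF
  have hrepr : cylSet Z t f = ⋂ i ∈ Finset.range t, (Z i ⁻¹' {F i}) := by
    ext ω
    simp only [mem_cylSet, Set.mem_iInter, Finset.mem_range, Set.mem_preimage,
      Set.mem_singleton_iff]
    constructor
    · intro h i hi
      have hFi : F i = f ⟨i, hi⟩ := by simp [hF, hi]
      rw [hFi]
      exact h ⟨i, hi⟩
    · intro h i
      have hFi : F (i:ℕ) = f i := by simp [hF]
      rw [← hFi]
      exact h i i.isLt
  rw [hrepr]
  rw [hindep.meas_biInter (fun i _ => ⟨{F i}, trivial, rfl⟩)]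
  have : ∀ i ∈ Finset.range t, μ (Z i ⁻¹' {F i}) = Wgt p (F i) :=
    fun i _ => meas_preimage μ hp hp1 hmeas hbern i (F i)
  rw [Finset.prod_congr rfl this]
  rw [← Fin.prod_univ_eq_prod_range (fun n => Wgt p (F n)) t]
  apply Finset.prod_congr rfl
  intro i _
  congr 1
  simp [hF]

lemma meas_Bset {p : ℝ} (hp : 0 < p) (hp1 : p < 1) {Z : ℕ → Ω → Bool}
    (hmeas : ∀ i, Measurable (Z i))
    (hindep : iIndepFun Z μ)
    (hbern : ∀ i, μ {ω | Z i ω = true} = ENNReal.ofReal p)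
    (w t : ℕ) : μ (Bset Z w t) = aSeq p w t := by
  rw [Bset_eq_union]
  rw [measure_biUnion_finset ?hd (fun f _ => cylSet_measurable hmeas t f)]
  · rw [aSeq]
    exact Finset.sum_congr rfl (fun f _ => meas_cylSet μ hp hp1 hmeas hindep hbern t f)
  case hd =>
    intro f hf g hg hfg
    exact cylSet_disjoint hfg

lemma Bset_measurable {Z : ℕ → Ω → Bool} (hmeas : ∀ i, Measurable (Z i)) (w t : ℕ) :
    MeasurableSet (Bset Z w t) := by
  rw [Bset_eq_union]
  exact (Finset.filter (okF w t) Finset.univ).measurableSet_biUnion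
    (fun f _ => cylSet_measurable hmeas t f)

end meas
lemma window_iff {Ω : Type*} (Z : ℕ → Ω → Bool) (w : ℕ) (hw : 2 ≤ w) (t : ℕ) (ω : Ω) :
    (∀ s ∈ {s : ℕ | 2 ≤ ((Finset.range s).filter
        (fun i : ℕ => (s : ℕ∞) ≤ (i : ℕ∞) + (w : ℕ∞) ∧ Z i ω = true)).card}, t < s)
      ↔ ω ∈ Bset Z w t := by
  constructor
  · intro h i j hij hjt hjw ⟨hi, hj⟩
    have hsmem : (j+1) ∈ {s : ℕ | 2 ≤ ((Finset.range s).filter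
        (fun i : ℕ => (s : ℕ∞) ≤ (i : ℕ∞) + (w : ℕ∞) ∧ Z i ω = true)).card} := by
      simp only [Set.mem_setOf_eq]
      apply Finset.one_lt_card.mpr
      refine ⟨i, ?_, j, ?_, Nat.ne_of_lt hij⟩
      · simp only [Finset.mem_filter, Finset.mem_range]
        refine ⟨by omega, ?_, hi⟩
        exact_mod_cast Nat.cast_le.mpr (by omega : j + 1 ≤ i + w)
      · simp only [Finset.mem_filter, Finset.mem_range]
        refine ⟨by omega, ?_, hj⟩
        exact_mod_cast Nat.cast_le.mpr (by omega : j + 1 ≤ j + w)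
    have := h (j+1) hsmem
    omega
  · intro h s hs
    by_contra hts
    push_neg at hts
    simp only [Set.mem_setOf_eq] at hs
    obtain ⟨a, ha, b, hb, hab⟩ := Finset.one_lt_card.mp hs
    simp only [Finset.mem_filter, Finset.mem_range] at ha hb
    obtain ⟨has, hsa, hZa⟩ := ha
    obtain ⟨hbs, hsb, hZb⟩ := hb
    have hcast : ∀ x : ℕ, ((s : ℕ∞) ≤ (x : ℕ∞) + (w : ℕ∞)) → s ≤ x + w := by
      intro x hx
      exact_mod_cast hx
    rcases lt_or_gt_of_ne hab with hlt | hlt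
    · exact h a b hlt (by omega) (by have := hcast a hsa; omega) ⟨hZa, hZb⟩
    · exact h b a hlt (by omega) (by have := hcast b hsb; omega) ⟨hZb, hZa⟩

theorem stmt_6 {Ω : Type*} [MeasurableSpace Ω] (μ : Measure Ω) [IsProbabilityMeasure μ]
    (p : ℝ) (hp : 0 < p) (hp1 : p < 1)
    (Z : ℕ → Ω → Bool)
    (hmeas : ∀ i, Measurable (Z i))
    (hindep : iIndepFun Z μ)
    (hbern : ∀ i, μ {ω | Z i ω = true} = ENNReal.ofReal p)
    (w : ℕ) (hw : 2 ≤ w) :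
    ∫⁻ ω, tauWin Z (w : ℕ∞) 2 ω ∂μ
      = ENNReal.ofReal (1 / p + 1 / (p * (1 - (1 - p) ^ (w - 1)))) := by
  have hpt : ∀ ω, tauWin Z (w : ℕ∞) 2 ω
      = ∑' t : ℕ, (Bset Z w t).indicator (fun _ => (1:ℝ≥0∞)) ω := by
    intro ω
    rw [tauWin, sInf_image_nat]
    apply tsum_congr
    intro t
    rw [Set.indicator_apply]
    by_cases h : ω ∈ Bset Z w t
    · rw [if_pos ((window_iff Z w hw t ω).mpr h), if_pos h]
    · rw [if_neg (fun hc => h ((window_iff Z w hw t ω).mp hc)), if_neg h]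
  calc ∫⁻ ω, tauWin Z (w : ℕ∞) 2 ω ∂μ
      = ∫⁻ ω, ∑' t : ℕ, (Bset Z w t).indicator (fun _ => (1:ℝ≥0∞)) ω ∂μ := by
        apply lintegral_congr
        exact hpt
    _ = ∑' t : ℕ, ∫⁻ ω, (Bset Z w t).indicator (fun _ => (1:ℝ≥0∞)) ω ∂μ := by
        apply lintegral_tsum
        intro t
        exact (measurable_const.indicator (Bset_measurable hmeas w t)).aemeasurable
    _ = ∑' t : ℕ, μ (Bset Z w t) := by
        apply tsum_congr
        intro t
        rw [lintegral_indicator_const (Bset_measurable hmeas w t) 1, one_mul]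
    _ = ∑' t : ℕ, aSeq p w t := by
        apply tsum_congr
        intro t
        exact meas_Bset μ hp hp1 hmeas hindep hbern w t
    _ = ENNReal.ofReal (1 / p + 1 / (p * (1 - (1 - p) ^ (w - 1)))) := A_val hp hp1 hw
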